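/- For the self-avoiding walk measure on K_n with fugacity z and ν = n/z, the variance of the walk length satisfies var_{n,z}(L_n) = ν + (ν − n)/H_n(ν) − 1/H_n(ν)², where H_n(ν) := Γ(n) Q(n,ν)/(ν^n e^{-ν}). -/

import Mathlib

open Filter Finset Real

/-- Number of `k`-step SAWs weight: `(z/n)^k` times the number of walks. -/
noncomputable def sawWeight (n : ℕ) (z : ℝ) (k : ℕ) : ℝ :=
  (z / n) ^ k * ((n - 1).descFactorial k)

/-- Partition function of the variable-length SAW model on `K_n`. -/
noncomputable def sawZ (n : ℕ) (z : ℝ) : ℝ := ∑ k ∈ Finset.range n, sawWeight n z k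

/-- Probability that the walk length equals `k`. -/
noncomputable def sawProb (n : ℕ) (z : ℝ) (k : ℕ) : ℝ := sawWeight n z k / sawZ n z

/-- Mean walk length. -/
noncomputable def sawMean (n : ℕ) (z : ℝ) : ℝ := ∑ k ∈ Finset.range n, (k : ℝ) * sawProb n z k

/-- Variance of the walk length. -/
noncomputable def sawVar (n : ℕ) (z : ℝ) : ℝ :=
  (∑ k ∈ Finset.range n, (k : ℝ) ^ 2 * sawProb n z k) - (sawMean n z) ^ 2

/-- Tail distribution `P(L_n > x)` for real `x`. -/
noncomputable def sawTail (n : ℕ) (z : ℝ) (x : ℝ) : ℝ :=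
  ∑ k ∈ Finset.range n, if x < (k : ℝ) then sawProb n z k else 0

/-- Regularised incomplete gamma function at integer first argument,
    `Q(n, ν) = e^{-ν} ∑_{j<n} ν^j/j!`. -/
noncomputable def Qreg (n : ℕ) (ν : ℝ) : ℝ :=
  Real.exp (-ν) * ∑ j ∈ Finset.range n, ν ^ j / (Nat.factorial j)

/-- `H_n(ν) = Γ(n) Q(n,ν) / (ν^n e^{-ν})`. -/
noncomputable def Hfun (n : ℕ) (ν : ℝ) : ℝ :=
  Real.Gamma n * Qreg n ν / (ν ^ n * Real.exp (-ν))

/-- Standard normal density. -/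
noncomputable def normpdf (x : ℝ) : ℝ := Real.exp (-x ^ 2 / 2) / Real.sqrt (2 * Real.pi)

/-- Standard normal tail distribution `Φ̄`. -/
noncomputable def normTail (x : ℝ) : ℝ := ∫ t in Set.Ioi x, normpdf t

/-- `η(λ) = sgn(λ-1) √(2(λ-1-log λ))`. -/
noncomputable def etaF (l : ℝ) : ℝ := Real.sign (l - 1) * Real.sqrt (2 * (l - 1 - Real.log l))

/-- `Γ*(n) = √(n/(2π)) e^n n^{-n} Γ(n)`. -/
noncomputable def gammaStar (n : ℕ) : ℝ :=
  Real.sqrt (n / (2 * Real.pi)) * Real.exp n * ((n : ℝ) ^ n)⁻¹ * Real.Gamma n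

/-- The operator `(ν d/dν)^l`. -/
noncomputable def thetaOp : ℕ → (ℝ → ℝ) → (ℝ → ℝ)
  | 0, f => f
  | (l + 1), f => fun ν => ν * deriv (thetaOp l f) ν


open Finset Real

namespace SawAux

noncomputable def A (m : ℕ) (ν : ℝ) : ℝ :=
  ∑ k ∈ Finset.range (m+1), ν⁻¹ ^ k * (m.descFactorial k)

noncomputable def Bx (m : ℕ) (ν : ℝ) : ℝ :=
  ∑ k ∈ Finset.range (m+1), (k : ℝ) * (ν⁻¹ ^ k * (m.descFactorial k))

noncomputable def Cx (m : ℕ) (ν : ℝ) : ℝ :=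
  ∑ k ∈ Finset.range (m+1), (k : ℝ) ^ 2 * (ν⁻¹ ^ k * (m.descFactorial k))

noncomputable def S (m : ℕ) (ν : ℝ) : ℝ :=
  ∑ j ∈ Finset.range (m+1), ν ^ j / (Nat.factorial j)

lemma A_succ (m : ℕ) (ν : ℝ) : A (m+1) ν = 1 + ((m:ℝ)+1) * ν⁻¹ * A m ν := by
  unfold A
  rw [Finset.sum_range_succ']
  have h : ∀ k ∈ Finset.range (m+1),
      ν⁻¹ ^ (k+1) * (((m+1).descFactorial (k+1) : ℕ) : ℝ)
      = ((m:ℝ)+1) * ν⁻¹ * (ν⁻¹ ^ k * (m.descFactorial k)) := by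
    intro k _
    rw [Nat.succ_descFactorial_succ]
    push_cast
    ring
  rw [Finset.sum_congr rfl h, ← Finset.mul_sum]
  simp
  ring

lemma Bx_succ (m : ℕ) (ν : ℝ) : Bx (m+1) ν = ((m:ℝ)+1) * ν⁻¹ * (Bx m ν + A m ν) := by
  unfold Bx
  rw [Finset.sum_range_succ']
  have h : ∀ k ∈ Finset.range (m+1),
      ((k+1 : ℕ) : ℝ) * (ν⁻¹ ^ (k+1) * (((m+1).descFactorial (k+1) : ℕ) : ℝ))
      = ((m:ℝ)+1) * ν⁻¹ * ((k:ℝ) * (ν⁻¹ ^ k * (m.descFactorial k)) + ν⁻¹ ^ k * (m.descFactorial k)) := by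
    intro k _
    rw [Nat.succ_descFactorial_succ]
    push_cast
    ring
  rw [Finset.sum_congr rfl h, ← Finset.mul_sum, Finset.sum_add_distrib]
  simp [A, Bx]

lemma Cx_succ (m : ℕ) (ν : ℝ) :
    Cx (m+1) ν = ((m:ℝ)+1) * ν⁻¹ * (Cx m ν + 2 * Bx m ν + A m ν) := by
  unfold Cx
  rw [Finset.sum_range_succ']
  have h : ∀ k ∈ Finset.range (m+1),
      ((k+1 : ℕ) : ℝ) ^ 2 * (ν⁻¹ ^ (k+1) * (((m+1).descFactorial (k+1) : ℕ) : ℝ))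
      = ((m:ℝ)+1) * ν⁻¹ * ((k:ℝ) ^ 2 * (ν⁻¹ ^ k * (m.descFactorial k))
          + 2 * ((k:ℝ) * (ν⁻¹ ^ k * (m.descFactorial k))) + ν⁻¹ ^ k * (m.descFactorial k)) := by
    intro k _
    rw [Nat.succ_descFactorial_succ]
    push_cast
    ring
  rw [Finset.sum_congr rfl h, ← Finset.mul_sum, Finset.sum_add_distrib, Finset.sum_add_distrib,
    ← Finset.mul_sum]
  simp [A, Bx, Cx]

lemma B_eq (m : ℕ) (ν : ℝ) (hν : ν ≠ 0) : Bx m ν = ((m:ℝ) - ν) * A m ν + ν := by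
  induction m with
  | zero => simp [A, Bx]
  | succ m ih =>
      rw [Bx_succ, ih, A_succ]
      push_cast
      field_simp
      ring

lemma C_eq (m : ℕ) (ν : ℝ) (hν : ν ≠ 0) :
    Cx m ν = (((m:ℝ) - ν) ^ 2 + ν) * A m ν + ν * ((m:ℝ) - 1 - ν) := by
  induction m with
  | zero => simp [A, Cx]; ring
  | succ m ih =>
      rw [Cx_succ, ih, B_eq m ν hν, A_succ]
      push_cast
      field_simp
      ring

lemma A_eq_S (m : ℕ) (ν : ℝ) (hν : ν ≠ 0) :
    A m ν = ν⁻¹ ^ m * (m.factorial : ℝ) * S m ν := by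
  induction m with
  | zero => simp [A, S]
  | succ m ih =>
      rw [A_succ, ih]
      have hS : S (m+1) ν = S m ν + ν ^ (m+1) / ((m+1).factorial : ℝ) := by
        unfold S
        rw [Finset.sum_range_succ]
      have hpow : ν⁻¹ ^ (m+1) * ν ^ (m+1) = 1 := by
        rw [← mul_pow, inv_mul_cancel₀ hν, one_pow]
      have hfac : (((m+1).factorial : ℕ) : ℝ) ≠ 0 := by
        exact_mod_cast Nat.factorial_ne_zero (m+1)
      rw [hS]
      have : ν⁻¹ ^ (m+1) * ((m+1).factorial : ℝ) * (ν ^ (m+1) / ((m+1).factorial : ℝ))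
          = 1 := by
        field_simp
        rw [one_div]; exact hpow
      rw [mul_add, this]
      rw [Nat.factorial_succ]
      push_cast
      ring

lemma A_pos (m : ℕ) (ν : ℝ) (hν : 0 < ν) : 0 < A m ν := by
  unfold A
  apply Finset.sum_pos'
  · intro k _
    positivity
  · exact ⟨0, Finset.mem_range.2 (Nat.succ_pos m), by simp⟩

end SawAux

theorem saw_var_eq (n : ℕ) (hn : 1 ≤ n) (z : ℝ) (hz : 0 < z) :
    sawVar n z = (n / z) + ((n / z) - n) / Hfun n (n / z) - 1 / (Hfun n (n / z)) ^ 2 := by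
  obtain ⟨m, rfl⟩ : ∃ m, n = m + 1 := ⟨n - 1, (Nat.succ_pred_eq_of_pos hn).symm⟩
  set ν : ℝ := ((m + 1 : ℕ) : ℝ) / z with hνdef
  have hνpos : 0 < ν := by positivity
  have hν : ν ≠ 0 := hνpos.ne'
  have hA := SawAux.A_pos m ν hνpos
  have hw : ∀ k, sawWeight (m+1) z k = ν⁻¹ ^ k * ((m.descFactorial k : ℕ) : ℝ) := by
    intro k
    unfold sawWeight
    have h1 : z / ((m+1 : ℕ) : ℝ) = ν⁻¹ := by rw [hνdef, inv_div]
    have h2 : m + 1 - 1 = m := rfl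
    rw [h1, h2]
  have hZ : sawZ (m+1) z = SawAux.A m ν := by
    unfold sawZ SawAux.A
    exact Finset.sum_congr rfl (fun k _ => hw k)
  have hMean : sawMean (m+1) z = SawAux.Bx m ν / SawAux.A m ν := by
    unfold sawMean SawAux.Bx
    simp only [sawProb, hw, hZ, ← mul_div_assoc]
    rw [← Finset.sum_div]
  have hSq : (∑ k ∈ Finset.range (m+1), (k : ℝ) ^ 2 * sawProb (m+1) z k)
      = SawAux.Cx m ν / SawAux.A m ν := by
    unfold SawAux.Cx
    simp only [sawProb, hw, hZ, ← mul_div_assoc]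
    rw [← Finset.sum_div]
  have hH : Hfun (m+1) ν = SawAux.A m ν / ν := by
    unfold Hfun Qreg
    have hg : Real.Gamma ((m+1 : ℕ) : ℝ) = (m.factorial : ℝ) := by
      push_cast
      exact_mod_cast Real.Gamma_nat_eq_factorial m
    have hQs : (∑ j ∈ Finset.range (m+1), ν ^ j / (Nat.factorial j : ℝ)) = SawAux.S m ν := rfl
    rw [hg, hQs, SawAux.A_eq_S m ν hν, inv_pow]
    have he : Real.exp (-ν) ≠ 0 := Real.exp_ne_zero _
    field_simp
    ring
  unfold sawVar
  rw [hSq, hMean, hH, SawAux.B_eq m ν hν, SawAux.C_eq m ν hν]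
  field_simp
  push_cast
  ring
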